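/- Let c > 0, t > 0, and let y : [0,t] → ℝ be C¹ with y(0) = 0 and sup|y'| < c. Define τ : ℝ → ℝ by τ(x) = the unique s ∈ [0,t] with x = y(s) - c(t - s) for x ∈ [-ct, y(t)], the unique s ∈ [0,t] with x = y(s) + c(t - s) for x ∈ [y(t), ct], and τ(x) = 0 for x outside [-ct, ct]. Then τ is continuous on ℝ, differentiable on (-ct, y(t)) with τ'(x) = 1/(c + y'(τ(x))), and differentiable on (y(t), ct) with τ'(x) = -1/(c - y'(τ(x))). -/

import Mathlib

/-- the retarded-time function `τf` is continuous on `ℝ` and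
differentiable off `{y t, ±ct}` with `τf' = 1/(c + y'(τf x))` on `(-ct, y t)`
and `τf' = -1/(c - y'(τf x))` on `(y t, ct)`. -/
theorem stmt_8 (c t : ℝ) (hc : 0 < c) (ht : 0 < t)
    (y : ℝ → ℝ) (h0 : y 0 = 0)
    (hy : ∀ τ ∈ Set.Icc (0:ℝ) t, HasDerivAt y (deriv y τ) τ)
    (hy' : ContinuousOn (deriv y) (Set.Icc 0 t))
    (vbar : ℝ) (hv : ∀ τ ∈ Set.Icc (0:ℝ) t, |deriv y τ| ≤ vbar) (hvc : vbar < c)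
    (τf : ℝ → ℝ)
    (hτ1 : ∀ x ∈ Set.Icc (-(c*t)) (y t),
      τf x ∈ Set.Icc (0:ℝ) t ∧ x = y (τf x) - c*(t - τf x))
    (hτ2 : ∀ x ∈ Set.Icc (y t) (c*t),
      τf x ∈ Set.Icc (0:ℝ) t ∧ x = y (τf x) + c*(t - τf x))
    (hτ3 : ∀ x, x ∉ Set.Icc (-(c*t)) (c*t) → τf x = 0) :
    Continuous τf ∧
    (∀ x ∈ Set.Ioo (-(c*t)) (y t),
      HasDerivAt τf (1/(c + deriv y (τf x))) x) ∧
    (∀ x ∈ Set.Ioo (y t) (c*t),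
      HasDerivAt τf (-(1/(c - deriv y (τf x)))) x) := by
  have hv0 : 0 ≤ vbar := le_trans (abs_nonneg _) (hv 0 ⟨le_refl 0, ht.le⟩)
  have hcv : 0 < c - vbar := sub_pos.2 hvc
  have hyc : ContinuousOn y (Set.Icc 0 t) :=
    fun s hs => ((hy s hs).continuousAt).continuousWithinAt
  -- MVT bound
  have key : ∀ a ∈ Set.Icc (0:ℝ) t, ∀ b ∈ Set.Icc (0:ℝ) t,
      |y a - y b| ≤ vbar * |a - b| := by
    have main : ∀ a b : ℝ, a ∈ Set.Icc (0:ℝ) t → b ∈ Set.Icc (0:ℝ) t → a < b →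
        |y b - y a| ≤ vbar * (b - a) := by
      intro a b ha hb hab
      have hsub : Set.Icc a b ⊆ Set.Icc (0:ℝ) t := Set.Icc_subset_Icc ha.1 hb.2
      obtain ⟨ξ, hξ, hslope⟩ := exists_hasDerivAt_eq_slope y (deriv y) hab
        (hyc.mono hsub) (fun u hu => hy u (hsub (Set.Ioo_subset_Icc_self hu)))
      have hξI : ξ ∈ Set.Icc (0:ℝ) t := hsub (Set.Ioo_subset_Icc_self hξ)
      have hba : (0:ℝ) < b - a := sub_pos.2 hab
      have heq : y b - y a = deriv y ξ * (b - a) := by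
        field_simp at hslope; linarith [hslope]
      rw [heq, abs_mul, abs_of_pos hba]
      exact mul_le_mul_of_nonneg_right (hv ξ hξI) hba.le
    intro a ha b hb
    rcases lt_trichotomy a b with h | h | h
    · rw [abs_sub_comm (y a), abs_sub_comm a b, abs_of_pos (sub_pos.2 h)]
      exact main a b ha hb h
    · simp [h]
    · rw [abs_of_pos (sub_pos.2 h)]
      exact main b a hb ha h
  -- bounds on y t
  have hyt : |y t| ≤ vbar * t := by
    have := key t ⟨ht.le, le_refl t⟩ 0 ⟨le_refl 0, ht.le⟩
    simpa [h0, abs_of_pos ht] using this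
  have hyt1 : -(c*t) < y t := by
    have := (abs_le.mp hyt).1; nlinarith
  have hyt2 : y t < c*t := by
    have := (abs_le.mp hyt).2; nlinarith
  -- τf vanishes on the left tail
  have hτneg : ∀ x ≤ -(c*t), τf x = 0 := by
    intro x hx
    rcases eq_or_lt_of_le hx with h | h
    · obtain ⟨hs, hxeq⟩ := hτ1 x (by rw [h]; exact ⟨le_refl _, hyt1.le⟩)
      set s := τf x with hsdef
      have hval : y s = -(c*s) := by rw [h] at hxeq; linarith
      have := key s hs 0 ⟨le_refl 0, ht.le⟩
      rw [h0, hval, sub_zero, abs_neg, abs_of_nonneg (mul_nonneg hc.le hs.1),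
        sub_zero, abs_of_nonneg hs.1] at this
      nlinarith [hs.1]
    · exact hτ3 x (fun hmem => absurd hmem.1 (not_le.2 h))
  have hτpos : ∀ x, c*t ≤ x → τf x = 0 := by
    intro x hx
    rcases eq_or_lt_of_le hx with h | h
    · obtain ⟨hs, hxeq⟩ := hτ2 x (by rw [← h]; exact ⟨hyt2.le, le_refl _⟩)
      set s := τf x with hsdef
      have hval : y s = c*s := by rw [← h] at hxeq; linarith
      have := key s hs 0 ⟨le_refl 0, ht.le⟩
      rw [h0, hval, sub_zero, abs_of_nonneg (mul_nonneg hc.le hs.1),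
        sub_zero, abs_of_nonneg hs.1] at this
      nlinarith [hs.1]
    · exact hτ3 x (fun hmem => absurd hmem.2 (not_le.2 h))
  -- Lipschitz constant
  set K : NNReal := ⟨(c - vbar)⁻¹, by positivity⟩ with hK
  have hKcoe : (K : ℝ) = (c - vbar)⁻¹ := rfl
  -- Lipschitz on the two middle pieces
  have lip2 : ContinuousOn τf (Set.Icc (-(c*t)) (y t)) := by
    refine (LipschitzOnWith.of_dist_le_mul (K := K) ?_).continuousOn
    intro x1 hx1 x2 hx2
    obtain ⟨hs1, he1⟩ := hτ1 x1 hx1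
    obtain ⟨hs2, he2⟩ := hτ1 x2 hx2
    set s1 := τf x1; set s2 := τf x2
    have hk := key s1 hs1 s2 hs2
    have h1 : c * |s1 - s2| ≤ |x1 - x2| + vbar * |s1 - s2| := by
      have : c * (s1 - s2) = (x1 - x2) - (y s1 - y s2) := by
        rw [he1, he2]; ring
      calc c * |s1 - s2| = |c * (s1 - s2)| := by
            rw [abs_mul, abs_of_pos hc]
        _ = |(x1 - x2) - (y s1 - y s2)| := by rw [this]
        _ ≤ |x1 - x2| + |y s1 - y s2| := abs_sub _ _
        _ ≤ |x1 - x2| + vbar * |s1 - s2| := by linarith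
    rw [Real.dist_eq, Real.dist_eq, hKcoe, inv_mul_eq_div, le_div_iff₀ hcv]
    nlinarith [abs_nonneg (s1 - s2)]
  have lip3 : ContinuousOn τf (Set.Icc (y t) (c*t)) := by
    refine (LipschitzOnWith.of_dist_le_mul (K := K) ?_).continuousOn
    intro x1 hx1 x2 hx2
    obtain ⟨hs1, he1⟩ := hτ2 x1 hx1
    obtain ⟨hs2, he2⟩ := hτ2 x2 hx2
    set s1 := τf x1; set s2 := τf x2
    have hk := key s1 hs1 s2 hs2
    have h1 : c * |s1 - s2| ≤ |x1 - x2| + vbar * |s1 - s2| := by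
      have : c * (s1 - s2) = (y s1 - y s2) - (x1 - x2) := by
        rw [he1, he2]; ring
      calc c * |s1 - s2| = |c * (s1 - s2)| := by
            rw [abs_mul, abs_of_pos hc]
        _ = |(y s1 - y s2) - (x1 - x2)| := by rw [this]
        _ ≤ |y s1 - y s2| + |x1 - x2| := abs_sub _ _
        _ ≤ |x1 - x2| + vbar * |s1 - s2| := by linarith
    rw [Real.dist_eq, Real.dist_eq, hKcoe, inv_mul_eq_div, le_div_iff₀ hcv]
    nlinarith [abs_nonneg (s1 - s2)]
  have lip1 : ContinuousOn τf (Set.Iic (-(c*t))) :=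
    continuousOn_const.congr (fun x hx => hτneg x hx)
  have lip4 : ContinuousOn τf (Set.Ici (c*t)) :=
    continuousOn_const.congr (fun x hx => hτpos x hx)
  -- glue via a finite closed cover
  have hcont : Continuous τf := by
    set F : Fin 4 → Set ℝ :=
      ![Set.Iic (-(c*t)), Set.Icc (-(c*t)) (y t), Set.Icc (y t) (c*t), Set.Ici (c*t)] with hF
    have hlf : LocallyFinite F := locallyFinite_of_finite F
    have hcov : ⋃ i, F i = Set.univ := by
      apply Set.eq_univ_iff_forall.2
      intro x
      rcases le_total x (-(c*t)) with h | h
      · exact Set.mem_iUnion.2 ⟨0, h⟩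
      · rcases le_total x (y t) with h2 | h2
        · exact Set.mem_iUnion.2 ⟨1, ⟨h, h2⟩⟩
        · rcases le_total x (c*t) with h3 | h3
          · exact Set.mem_iUnion.2 ⟨2, ⟨h2, h3⟩⟩
          · exact Set.mem_iUnion.2 ⟨3, h3⟩
    have hclosed : ∀ i, IsClosed (F i) := by
      intro i
      fin_cases i
      · exact isClosed_Iic
      · exact isClosed_Icc
      · exact isClosed_Icc
      · exact isClosed_Ici
    have hcon : ∀ i, ContinuousOn τf (F i) := by
      intro i
      fin_cases i
      · exact lip1
      · exact lip2
      · exact lip3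
      · exact lip4
    exact hlf.continuous hcov hclosed hcon
  refine ⟨hcont, ?_, ?_⟩
  · intro x hx
    have hxI : x ∈ Set.Icc (-(c*t)) (y t) := Set.Ioo_subset_Icc_self hx
    obtain ⟨hs, hxeq⟩ := hτ1 x hxI
    set s := τf x with hsdef
    have hd : HasDerivAt (fun u => y u - c*(t - u)) (deriv y s + c) s := by
      have h1 := hy s hs
      have h2 : HasDerivAt (fun u => c*(t - u)) (c * (-1)) s :=
        ((hasDerivAt_id s).const_sub t).const_mul c
      have := h1.sub h2
      exact this.congr_deriv (by ring)
    have hne : deriv y s + c ≠ 0 := by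
      have := (abs_le.mp (hv s hs)).1
      intro h; nlinarith
    have hev : ∀ᶠ u in nhds x, (fun u => y u - c*(t - u)) (τf u) = u := by
      filter_upwards [Ioo_mem_nhds hx.1 hx.2] with u hu
      exact (hτ1 u (Set.Ioo_subset_Icc_self hu)).2.symm
    have := HasDerivAt.of_local_left_inverse hcont.continuousAt hd hne hev
    have hre : (deriv y s + c)⁻¹ = 1/(c + deriv y s) := by
      rw [one_div, add_comm]
    rw [hre] at this
    exact this
  · intro x hx
    have hxI : x ∈ Set.Icc (y t) (c*t) := Set.Ioo_subset_Icc_self hx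
    obtain ⟨hs, hxeq⟩ := hτ2 x hxI
    set s := τf x with hsdef
    have hd : HasDerivAt (fun u => y u + c*(t - u)) (deriv y s - c) s := by
      have h1 := hy s hs
      have h2 : HasDerivAt (fun u => c*(t - u)) (c * (-1)) s :=
        ((hasDerivAt_id s).const_sub t).const_mul c
      have := h1.add h2
      exact this.congr_deriv (by ring)
    have hne : deriv y s - c ≠ 0 := by
      have := (abs_le.mp (hv s hs)).2
      intro h; nlinarith
    have hev : ∀ᶠ u in nhds x, (fun u => y u + c*(t - u)) (τf u) = u := by
      filter_upwards [Ioo_mem_nhds hx.1 hx.2] with u hu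
      exact (hτ2 u (Set.Ioo_subset_Icc_self hu)).2.symm
    have := HasDerivAt.of_local_left_inverse hcont.continuousAt hd hne hev
    have hre : (deriv y s - c)⁻¹ = -(1/(c - deriv y s)) := by
      rw [one_div, ← inv_neg, neg_sub]
    rw [hre] at this
    exact this
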